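/- Let l be an odd prime, K a non-Galois number field of degree l with Galois closure L satisfying Gal(L/Q) ≅ D_l. If p is a rational prime whose ramification index in L/Q is divisible by l, then p is totally ramified in K/Q. -/

import Mathlib

open NumberField
open UniqueFactorizationMonoid

/-- Let `l` be an odd prime and `K` a non-Galois number field of
degree `l` whose Galois closure `L` over `ℚ` has Galois group `D_l`. If a rational
prime `p` has ramification index divisible by `l` in `L/ℚ`, then `p` is totally
ramified in `K/ℚ`, i.e. `p·O_K = β^l` for a prime ideal `β` of `O_K`. -/
theorem totally_ramified_in_K_of_l_dvd_ramification
    (l : ℕ) (hl : l.Prime) (hodd : Odd l)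
    (K L : Type*) [Field K] [NumberField K] [Field L] [NumberField L]
    [Algebra K L] [IsScalarTower ℚ K L]
    (hK : Module.finrank ℚ K = l) (hKnotGal : ¬ IsGalois ℚ K)
    [IsGalois ℚ L] (hL : Module.finrank ℚ L = 2 * l)
    (hdihedral : Nonempty ((L ≃ₐ[ℚ] L) ≃* DihedralGroup l))
    (p : ℕ) (hp : p.Prime)
    (hram : ∀ P : Ideal (𝓞 L), P.IsPrime →
      Ideal.comap (algebraMap ℤ (𝓞 L)) P = Ideal.span {(p : ℤ)} →
      l ∣ Ideal.ramificationIdx' (Ideal.span {(p : ℤ)}) P) :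
    ∃ β : Ideal (𝓞 K), β.IsPrime ∧
      Ideal.map (algebraMap ℤ (𝓞 K)) (Ideal.span {(p : ℤ)}) = β ^ l := by
  classical
  set pZ : Ideal ℤ := Ideal.span {(p : ℤ)} with hpZdef
  have hpprime : Prime (p : ℤ) := Nat.prime_iff_prime_int.mp hp
  have hpZ_ne_bot : pZ ≠ ⊥ := by
    simpa [pZ, Ideal.span_singleton_eq_bot] using hpprime.ne_zero
  have hpZ_prime : pZ.IsPrime :=
    (Ideal.span_singleton_prime hpprime.ne_zero).mpr hpprime
  haveI hpZ_max : pZ.IsMaximal := hpZ_prime.isMaximal hpZ_ne_bot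
  -- injectivity facts
  have hinjK : Function.Injective (algebraMap ℤ (𝓞 K)) := by
    have : algebraMap ℤ (𝓞 K) = Int.castRingHom (𝓞 K) := algebraMap_int_eq _
    rw [this]
    exact Int.cast_injective
  have hinjL : Function.Injective (algebraMap ℤ (𝓞 L)) := by
    have : algebraMap ℤ (𝓞 L) = Int.castRingHom (𝓞 L) := algebraMap_int_eq _
    rw [this]
    exact Int.cast_injective
  have hinjKL : Function.Injective (algebraMap (𝓞 K) (𝓞 L)) := by
    have h1 : Function.Injective (algebraMap (𝓞 K) L) := by
      rw [IsScalarTower.algebraMap_eq (𝓞 K) K L]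
      exact (algebraMap K L).injective.comp (IsFractionRing.injective (𝓞 K) K)
    rw [IsScalarTower.algebraMap_eq (𝓞 K) (𝓞 L) L, RingHom.coe_comp] at h1
    exact h1.of_comp
  -- choose a prime β of 𝓞 K over p
  obtain ⟨β, -, hβprime, hβcomap⟩ :=
    Ideal.exists_ideal_over_prime_of_isIntegral pZ (⊥ : Ideal (𝓞 K))
      (by rw [← RingHom.ker_eq_comap_bot, (RingHom.injective_iff_ker_eq_bot _).mp hinjK]
          exact bot_le)
  haveI := hβprime
  have hβ_ne_bot : β ≠ ⊥ := by
    rintro rfl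
    exact hpZ_ne_bot (by rw [← hβcomap, Ideal.comap_bot_of_injective _ hinjK])
  haveI hβmax : β.IsMaximal := hβprime.isMaximal hβ_ne_bot
  -- choose a prime P of 𝓞 L over β
  obtain ⟨P, -, hPprime, hPcomap⟩ :=
    Ideal.exists_ideal_over_prime_of_isIntegral β (⊥ : Ideal (𝓞 L))
      (by rw [← RingHom.ker_eq_comap_bot, (RingHom.injective_iff_ker_eq_bot _).mp hinjKL]
          exact bot_le)
  haveI := hPprime
  have hP_ne_bot : P ≠ ⊥ := by
    rintro rfl
    exact hβ_ne_bot (by rw [← hPcomap, Ideal.comap_bot_of_injective _ hinjKL])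
  have halg_eq : algebraMap ℤ (𝓞 L)
      = (algebraMap (𝓞 K) (𝓞 L)).comp (algebraMap ℤ (𝓞 K)) :=
    IsScalarTower.algebraMap_eq ℤ (𝓞 K) (𝓞 L)
  have hPZ : Ideal.comap (algebraMap ℤ (𝓞 L)) P = pZ := by
    rw [halg_eq, ← Ideal.comap_comap, hPcomap, hβcomap]
  have hdvd : l ∣ Ideal.ramificationIdx' pZ P := hram P hPprime hPZ
  -- split the ramification index in the tower ℤ ⊆ 𝓞 K ⊆ 𝓞 L
  have hmapβ_ne : Ideal.map (algebraMap (𝓞 K) (𝓞 L)) β ≠ ⊥ := by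
    rw [Ne, Ideal.map_eq_bot_iff_of_injective hinjKL]
    exact hβ_ne_bot
  have hmapp_ne : Ideal.map (algebraMap ℤ (𝓞 K)) pZ ≠ ⊥ := by
    rw [Ne, Ideal.map_eq_bot_iff_of_injective hinjK]
    exact hpZ_ne_bot
  have hmappL_ne : Ideal.map (algebraMap ℤ (𝓞 L)) pZ ≠ ⊥ := by
    rw [Ne, Ideal.map_eq_bot_iff_of_injective hinjL]
    exact hpZ_ne_bot
  have hmapβ_le : Ideal.map (algebraMap (𝓞 K) (𝓞 L)) β ≤ P :=
    Ideal.map_le_iff_le_comap.mpr (le_of_eq hPcomap.symm)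
  have hmapp_leβ : Ideal.map (algebraMap ℤ (𝓞 K)) pZ ≤ β :=
    Ideal.map_le_iff_le_comap.mpr (le_of_eq hβcomap.symm)
  have hsplit := Ideal.ramificationIdx'_algebra_tower (p := pZ) (P := β) (Q := P)
    hmapβ_ne (by rw [← halg_eq] at *; exact hmappL_ne) hmapβ_le
  set e1 := Ideal.ramificationIdx' pZ β with he1
  set e2 := Ideal.ramificationIdx' β P with he2
  rw [hsplit] at hdvd
  -- [L : K] = 2
  have hKL : Module.finrank K L = 2 := by
    have htower := Module.finrank_mul_finrank ℚ K L
    rw [hK, hL] at htower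
    have : l * Module.finrank K L = l * 2 := by omega
    exact Nat.eq_of_mul_eq_mul_left hl.pos this
  -- l is at least 3
  have hl3 : 3 ≤ l := by
    have h2 := hl.two_le
    have : l ≠ 2 := by rintro rfl; exact (by decide : ¬ Odd 2) hodd
    omega
  -- e2 · f2 ≤ [L : K] = 2
  haveI : P.LiesOver β := ⟨hPcomap.symm⟩
  have hPmem : P ∈ (factors (Ideal.map (algebraMap (𝓞 K) (𝓞 L)) β)).toFinset := by
    rw [Multiset.mem_toFinset, factors_eq_normalizedFactors,
      mem_normalizedFactors_iff hmapβ_ne]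
    exact ⟨Ideal.prime_of_isPrime hP_ne_bot hPprime, Ideal.dvd_iff_le.mpr hmapβ_le⟩
  have hsum2 := Ideal.sum_ramification_inertia (R := 𝓞 K) (S := 𝓞 L) (p := β) K L hβ_ne_bot
  have hterm2 : e2 * Ideal.inertiaDeg' β P ≤ 2 := by
    rw [← hKL, ← hsum2]
    exact Finset.single_le_sum
      (f := fun Q => Ideal.ramificationIdx' β Q
        * Ideal.inertiaDeg' β Q)
      (fun Q _ => Nat.zero_le _) hPmem
  have hf2pos : 0 < Ideal.inertiaDeg' β P :=
    Ideal.inertiaDeg'_pos β P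
  have he2pos : e2 ≠ 0 :=
    Ideal.IsDedekindDomain.ramificationIdx'_ne_zero hmapβ_ne hPprime hmapβ_le
  have he2le : e2 ≤ 2 := le_trans (Nat.le_mul_of_pos_right _ hf2pos) hterm2
  -- hence l ∣ e1
  have hle1 : l ∣ e1 := by
    rcases (Nat.Prime.dvd_mul hl).mp hdvd with h | h
    · exact h
    · exact absurd (Nat.le_of_dvd (Nat.pos_of_ne_zero he2pos) h) (by omega)
  have he1pos : e1 ≠ 0 :=
    Ideal.IsDedekindDomain.ramificationIdx'_ne_zero hmapp_ne hβprime hmapp_leβ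
  have he1ge : l ≤ e1 := Nat.le_of_dvd (Nat.pos_of_ne_zero he1pos) hle1
  haveI : β.LiesOver pZ := ⟨hβcomap.symm⟩
  have hf1pos : 0 < Ideal.inertiaDeg' pZ β :=
    Ideal.inertiaDeg'_pos pZ β
  -- the fundamental identity in K
  have hsum1 := Ideal.sum_ramification_inertia (R := ℤ) (S := 𝓞 K) (p := pZ) ℚ K hpZ_ne_bot
  rw [hK] at hsum1
  set s := (factors (Ideal.map (algebraMap ℤ (𝓞 K)) pZ)).toFinset with hsdef
  have hβmem : β ∈ s := by
    rw [hsdef, Multiset.mem_toFinset, factors_eq_normalizedFactors,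
      mem_normalizedFactors_iff hmapp_ne]
    exact ⟨Ideal.prime_of_isPrime hβ_ne_bot hβprime, Ideal.dvd_iff_le.mpr hmapp_leβ⟩
  -- the β-term already accounts for everything
  have hterm1ge : l ≤ e1 * Ideal.inertiaDeg' pZ β :=
    le_trans he1ge (Nat.le_mul_of_pos_right _ hf1pos)
  have hsum_split := (Finset.add_sum_erase s
      (fun Q => Ideal.ramificationIdx' pZ Q
        * Ideal.inertiaDeg' pZ Q) hβmem).trans hsum1
  rw [← he1] at hsum_split
  have hterm1 : e1 * Ideal.inertiaDeg' pZ β = l :=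
    le_antisymm (hsum_split ▸ Nat.le_add_right _ _) hterm1ge
  have hrest0 : ∑ Q ∈ s.erase β, Ideal.ramificationIdx' pZ Q
      * Ideal.inertiaDeg' pZ Q = 0 := by omega
  have he1l : e1 = l := by
    have hle : e1 ≤ l := hterm1 ▸ Nat.le_mul_of_pos_right e1 hf1pos
    omega
  -- every prime factor of p·𝓞K equals β
  have hall : ∀ Q ∈ normalizedFactors (Ideal.map (algebraMap ℤ (𝓞 K)) pZ), Q = β := by
    intro Q hQ
    have hQs : Q ∈ s := by
      rw [hsdef, Multiset.mem_toFinset, factors_eq_normalizedFactors]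
      exact hQ
    by_contra hne
    have hQmem' : Q ∈ s.erase β := Finset.mem_erase.mpr ⟨hne, hQs⟩
    have hQprime : Q.IsPrime :=
      Ideal.isPrime_of_prime ((mem_normalizedFactors_iff hmapp_ne).mp hQ).1
    have hQle : Ideal.map (algebraMap ℤ (𝓞 K)) pZ ≤ Q :=
      Ideal.le_of_dvd ((mem_normalizedFactors_iff hmapp_ne).mp hQ).2
    have heQ : Ideal.ramificationIdx' pZ Q ≠ 0 :=
      Ideal.IsDedekindDomain.ramificationIdx'_ne_zero hmapp_ne hQprime hQle
    haveI := hQprime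
    have hQcomap : Ideal.comap (algebraMap ℤ (𝓞 K)) Q = pZ := by
      refine ((hpZ_max.eq_of_le (Ideal.comap_ne_top _ hQprime.ne_top) ?_)).symm
      exact Ideal.le_comap_of_map_le hQle
    haveI : Q.LiesOver pZ := ⟨hQcomap.symm⟩
    have hfQ : 0 < Ideal.inertiaDeg' pZ Q :=
      Ideal.inertiaDeg'_pos pZ Q
    have : 0 < Ideal.ramificationIdx' pZ Q
        * Ideal.inertiaDeg' pZ Q :=
      Nat.mul_pos (Nat.pos_of_ne_zero heQ) hfQ
    have hle0 : Ideal.ramificationIdx' pZ Q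
        * Ideal.inertiaDeg' pZ Q ≤ 0 := by
      rw [← hrest0]
      exact Finset.single_le_sum
        (f := fun Q => Ideal.ramificationIdx' pZ Q
          * Ideal.inertiaDeg' pZ Q)
        (fun R _ => Nat.zero_le _) hQmem'
    omega
  -- conclude: p·𝓞K = β ^ l
  have hcount : (normalizedFactors (Ideal.map (algebraMap ℤ (𝓞 K)) pZ)).count β = l := by
    rw [← Ideal.IsDedekindDomain.ramificationIdx'_eq_normalizedFactors_count hmapp_ne
      hβprime hβ_ne_bot, ← he1, he1l]
  have hrepl : normalizedFactors (Ideal.map (algebraMap ℤ (𝓞 K)) pZ)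
      = Multiset.replicate l β := by
    rw [Multiset.eq_replicate]
    constructor
    · rw [← hcount]
      exact (Multiset.count_eq_card.mpr (fun x hx => (hall x hx).symm)).symm
    · exact hall
  have hprod := prod_normalizedFactors hmapp_ne
  rw [hrepl, Multiset.prod_replicate] at hprod
  exact ⟨β, hβprime, (associated_iff_eq.mp hprod).symm⟩
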